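/- Fix a weight vector v̄ ∈ (0,1)^{p−s₀} and let W̄ = diag(1 + v̄). Let b*(v̄) minimize ‖Xb‖₂² subject to ‖b_{S₀}‖₁ − ‖W̄ b_{−S₀}‖₁ = 1, with sign vector z*_{S₀}(v̄) on S₀. For any weight vector w with 1 − v̄_j ≤ w_j ≤ 1 + v̄_j for all j ∉ S₀, let b(w) minimize ‖Xb‖₂² subject to z_{S₀}^{*T}(v̄) b_{S₀} − ‖W b_{−S₀}‖₁ ≥ 1 (W = diag(w)). Then X^T X b(w) = ‖Xb(w)‖₂² · W z(w) for some z(w) with z_{S₀}(w) = z*_{S₀}(v̄) and z_{−S₀}(w) ∈ −∂‖b_{−S₀}(w)‖₁; moreover s₀·‖Xb(w)‖₂²/n ≤ κ̂²(1+v̄, S₀). -/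

import Mathlib

open Finset

noncomputable def l1 {p : ℕ} (b : Fin p → ℝ) : ℝ := ∑ j, |b j|

def restr {p : ℕ} (S : Finset (Fin p)) (b : Fin p → ℝ) : Fin p → ℝ :=
  fun j => if j ∈ S then b j else 0

noncomputable def qf {n p : ℕ} (X : Matrix (Fin n) (Fin p) ℝ) (b : Fin p → ℝ) : ℝ :=
  ∑ i, (X.mulVec b i) ^ 2

lemma sgn_mul_self (x : ℝ) : Real.sign x * x = |x| := by
  rcases lt_trichotomy x 0 with h|h|h
  · rw [Real.sign_of_neg h, abs_of_neg h]; ring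
  · simp [h]
  · rw [Real.sign_of_pos h, abs_of_pos h]; ring

lemma abs_sgn_le (x : ℝ) : |Real.sign x| ≤ 1 := by
  rcases lt_trichotomy x 0 with h|h|h
  · simp [Real.sign_of_neg h]
  · simp [h]
  · simp [Real.sign_of_pos h]

lemma coef_nonpos (A B ε : ℝ) (hε : 0 < ε) (h : ∀ t, 0 < t → t < ε → A * t ≤ B * t^2) :
    A ≤ 0 := by
  by_contra hA
  push_neg at hA
  set t := min (ε/2) (A / (2*(|B|+1))) with ht
  have htp : 0 < t := lt_min (by linarith) (div_pos hA (by positivity))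
  have htε : t < ε := lt_of_le_of_lt (min_le_left _ _) (by linarith)
  have h1 := h t htp htε
  have h2 : B * t^2 ≤ (|B|+1) * t * t := by
    have : B ≤ |B| + 1 := le_trans (le_abs_self B) (by linarith)
    nlinarith
  have h3 : (|B|+1) * t ≤ A / 2 := by
    have : t ≤ A / (2*(|B|+1)) := min_le_right _ _
    rw [le_div_iff₀ (by positivity)] at this
    nlinarith [abs_nonneg B]
  nlinarith

lemma coef_zero (A B ε : ℝ) (hε : 0 < ε) (h : ∀ t, t ≠ 0 → |t| < ε → A * t ≤ B * t^2) :
    A = 0 := by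
  have h1 : A ≤ 0 := coef_nonpos A B ε hε (fun t ht htε =>
    h t (ne_of_gt ht) (by rw [abs_of_pos ht]; exact htε))
  have h2 : -A ≤ 0 := by
    apply coef_nonpos (-A) B ε hε
    intro t ht htε
    have := h (-t) (by simpa using ne_of_gt ht) (by rw [abs_neg, abs_of_pos ht]; exact htε)
    nlinarith
  linarith

lemma mulVec_pert {n p : ℕ} (X : Matrix (Fin n) (Fin p) ℝ) (b : Fin p → ℝ) (j : Fin p)
    (t : ℝ) (i : Fin n) :
    X.mulVec (fun k => b k + if k = j then t else 0) i = X.mulVec b i + t * X i j := by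
  simp [Matrix.mulVec, dotProduct, mul_add, Finset.sum_add_distrib, mul_ite, mul_zero,
    Finset.sum_ite_eq']
  ring

lemma grad_formula {n p : ℕ} (X : Matrix (Fin n) (Fin p) ℝ) (b : Fin p → ℝ) (j : Fin p) :
    ((X.transpose * X).mulVec b) j = ∑ i, X i j * X.mulVec b i := by
  rw [← Matrix.mulVec_mulVec]
  simp [Matrix.mulVec, dotProduct, Matrix.transpose_apply]

lemma qf_expand {n p : ℕ} (X : Matrix (Fin n) (Fin p) ℝ) (b : Fin p → ℝ) (j : Fin p) (t : ℝ) :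
    qf X (fun k => b k + if k = j then t else 0)
      = qf X b + 2 * t * ((X.transpose * X).mulVec b) j + t^2 * ∑ i, (X i j)^2 := by
  unfold qf
  rw [grad_formula]
  simp only [mulVec_pert]
  rw [Finset.mul_sum, Finset.mul_sum, ← Finset.sum_add_distrib, ← Finset.sum_add_distrib]
  apply Finset.sum_congr rfl
  intro i _
  ring

lemma qf_smul {n p : ℕ} (X : Matrix (Fin n) (Fin p) ℝ) (b : Fin p → ℝ) (a : ℝ) :
    qf X (fun k => a * b k) = a^2 * qf X b := by
  unfold qf
  rw [Finset.mul_sum]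
  apply Finset.sum_congr rfl
  intro i _
  have : X.mulVec (fun k => a * b k) i = a * X.mulVec b i := by
    simp [Matrix.mulVec, dotProduct, Finset.mul_sum]
    apply Finset.sum_congr rfl; intros; ring
  rw [this]; ring

lemma Fscale {p : ℕ} (S0 : Finset (Fin p)) (s w b : Fin p → ℝ) (a : ℝ) (ha : 0 ≤ a) :
    ((∑ k ∈ S0, s k * (a * b k)) - ∑ k ∈ S0ᶜ, w k * |a * b k|)
      = a * ((∑ k ∈ S0, s k * b k) - ∑ k ∈ S0ᶜ, w k * |b k|) := by
  rw [mul_sub, Finset.mul_sum, Finset.mul_sum]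
  congr 1
  · exact Finset.sum_congr rfl fun k _ => by ring
  · exact Finset.sum_congr rfl fun k _ => by rw [abs_mul, abs_of_nonneg ha]; ring

lemma Fpert {p : ℕ} (S0 : Finset (Fin p)) (s w bw : Fin p → ℝ) (j : Fin p) (t : ℝ) :
    ((∑ k ∈ S0, s k * (bw k + if k = j then t else 0))
      - ∑ k ∈ S0ᶜ, w k * |bw k + if k = j then t else 0|)
    = ((∑ k ∈ S0, s k * bw k) - ∑ k ∈ S0ᶜ, w k * |bw k|)
      + (if j ∈ S0 then s j * t else -(w j * (|bw j + t| - |bw j|))) := by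
  have e1 : ∀ k, s k * (bw k + if k = j then t else 0)
      = s k * bw k + (if k = j then s k * t else 0) := by
    intro k; by_cases h : k = j <;> simp [h] <;> ring
  have e2 : ∀ k, w k * |bw k + if k = j then t else 0|
      = w k * |bw k| + (if k = j then w k * (|bw k + t| - |bw k|) else 0) := by
    intro k; by_cases h : k = j <;> simp [h] <;> ring
  simp only [e1, e2, Finset.sum_add_distrib, Finset.sum_ite_eq', Finset.mem_compl]
  by_cases hj : j ∈ S0 <;> simp [hj] <;> ring

lemma key_ineq {n p : ℕ} (X : Matrix (Fin n) (Fin p) ℝ) (S0 : Finset (Fin p))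
    (s w : Fin p → ℝ) (bw : Fin p → ℝ)
    (hminw : ∀ b : Fin p → ℝ,
      (∑ j ∈ S0, s j * b j) - (∑ j ∈ S0ᶜ, w j * |b j|) ≥ 1 → qf X bw ≤ qf X b)
    (j : Fin p) (t : ℝ) (c' : ℝ)
    (hc : ((∑ k ∈ S0, s k * (bw k + if k = j then t else 0))
      - ∑ k ∈ S0ᶜ, w k * |bw k + if k = j then t else 0|) = c')
    (hc' : 0 < c') :
    qf X bw * c'^2 ≤ qf X bw + 2 * t * ((X.transpose * X).mulVec bw) j
      + t^2 * ∑ i, (X i j)^2 := by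
  have feas : (∑ k ∈ S0, s k * ((fun k => c'⁻¹ * (bw k + if k = j then t else 0)) k))
      - (∑ k ∈ S0ᶜ, w k * |(fun k => c'⁻¹ * (bw k + if k = j then t else 0)) k|) ≥ 1 := by
    simp only []
    rw [Fscale S0 s w _ c'⁻¹ (by positivity), hc, inv_mul_cancel₀ (ne_of_gt hc')]
  have h1 := hminw _ feas
  rw [qf_smul, qf_expand] at h1
  have h2 : 0 < c'^2 := by positivity
  have h3 := mul_le_mul_of_nonneg_left h1 (le_of_lt h2)
  calc qf X bw * c'^2 = c'^2 * qf X bw := by ring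
    _ ≤ c'^2 * (c'⁻¹^2 * (qf X bw + 2 * t * ((X.transpose * X).mulVec bw) j
          + t^2 * ∑ i, (X i j)^2)) := h3
    _ = qf X bw + 2 * t * ((X.transpose * X).mulVec bw) j + t^2 * ∑ i, (X i j)^2 := by
        field_simp

lemma kkt {n p : ℕ} (X : Matrix (Fin n) (Fin p) ℝ) (S0 : Finset (Fin p))
    (s w : Fin p → ℝ) (hs : ∀ j, |s j| ≤ 1)
    (hwb : ∀ j ∉ S0, 0 < w j ∧ w j < 2)
    (bw : Fin p → ℝ)
    (hconw : (∑ j ∈ S0, s j * bw j) - (∑ j ∈ S0ᶜ, w j * |bw j|) ≥ 1)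
    (hminw : ∀ b : Fin p → ℝ,
      (∑ j ∈ S0, s j * b j) - (∑ j ∈ S0ᶜ, w j * |b j|) ≥ 1 → qf X bw ≤ qf X b) :
    ∃ z : Fin p → ℝ,
      (∀ j, ((X.transpose * X).mulVec bw) j =
        qf X bw * ((if j ∈ S0 then 1 else w j) * z j)) ∧
      (∀ j ∈ S0, z j = s j) ∧
      (∀ j ∉ S0, |z j| ≤ 1) ∧
      (∑ j ∈ S0ᶜ, z j * bw j) = -(∑ j ∈ S0ᶜ, |bw j|) := by
  set L := qf X bw with hLdef
  have hL0 : 0 ≤ L := Finset.sum_nonneg fun i _ => sq_nonneg _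
  rcases eq_or_lt_of_le hL0 with hz | hLpos
  · -- degenerate case L = 0
    have hXbw : ∀ i, X.mulVec bw i = 0 := by
      intro i
      have h := (Finset.sum_eq_zero_iff_of_nonneg (fun i _ => sq_nonneg (X.mulVec bw i))).mp
        hz.symm i (Finset.mem_univ i)
      exact pow_eq_zero_iff (n := 2) (by norm_num) |>.mp h
    have hg : ∀ j, ((X.transpose * X).mulVec bw) j = 0 := by
      intro j; rw [grad_formula]; simp [hXbw]
    refine ⟨fun j => if j ∈ S0 then s j else -Real.sign (bw j), ?_, ?_, ?_, ?_⟩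
    · intro j; rw [hg j, ← hz]; ring
    · intro j hj; simp [hj]
    · intro j hj; simp only [hj, if_neg, abs_neg]; simpa [hj] using abs_sgn_le (bw j)
    · rw [← Finset.sum_neg_distrib]
      apply Finset.sum_congr rfl
      intro j hj
      rw [Finset.mem_compl] at hj
      show (if j ∈ S0 then s j else -Real.sign (bw j)) * bw j = -|bw j|
      rw [if_neg hj, ← sgn_mul_self (bw j)]; ring
  · -- L > 0
    set c := (∑ j ∈ S0, s j * bw j) - (∑ j ∈ S0ᶜ, w j * |bw j|) with hcdef
    have hc1 : c = 1 := by
      have feas : (∑ k ∈ S0, s k * ((fun k => c⁻¹ * bw k) k))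
          - (∑ k ∈ S0ᶜ, w k * |(fun k => c⁻¹ * bw k) k|) ≥ 1 := by
        simp only []
        rw [Fscale S0 s w bw c⁻¹ (by positivity), ← hcdef,
          inv_mul_cancel₀ (by positivity : c ≠ 0)]
      have h1 := hminw _ feas
      rw [qf_smul, ← hLdef] at h1
      have hcpos : (0:ℝ) < c := by linarith
      have h2 : c^2 * L ≤ L := by
        have := mul_le_mul_of_nonneg_left h1 (le_of_lt (by positivity : (0:ℝ) < c^2))
        calc c^2 * L ≤ c^2 * (c⁻¹^2 * L) := this
          _ = L := by field_simp
      have hc2 : c^2 ≤ 1 := by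
        have := (mul_le_mul_iff_left₀ hLpos).mp (by linarith : c^2 * L ≤ 1 * L)
        linarith
      nlinarith
    -- main case analysis per coordinate
    have hgS0 : ∀ j ∈ S0, ((X.transpose * X).mulVec bw) j = L * s j := by
      intro j hj
      have key : ∀ t : ℝ, t ≠ 0 → |t| < 1 →
          (2 * (L * s j - ((X.transpose * X).mulVec bw) j)) * t
            ≤ ((∑ i, (X i j)^2) - L * (s j)^2) * t^2 := by
        intro t ht htε
        have hc' : (0:ℝ) < 1 + s j * t := by
          have h1 : |s j * t| < 1 := by
            rw [abs_mul]
            calc |s j| * |t| ≤ 1 * |t| := mul_le_mul_of_nonneg_right (hs j) (abs_nonneg t)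
              _ = |t| := by ring
              _ < 1 := htε
          have := neg_abs_le (s j * t)
          linarith [abs_lt.mp h1]
        have hF := Fpert S0 s w bw j t
        rw [← hcdef, hc1, if_pos hj] at hF
        have hk := key_ineq X S0 s w bw hminw j t (1 + s j * t) hF hc'
        rw [← hLdef] at hk
        nlinarith
      have := coef_zero _ _ 1 one_pos key
      linarith
    have hgoff : ∀ j ∉ S0, ∃ zj : ℝ, |zj| ≤ 1 ∧ zj * bw j = -|bw j| ∧
        ((X.transpose * X).mulVec bw) j = L * (w j * zj) := by
      intro j hj
      obtain ⟨hw0, hw2⟩ := hwb j hj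
      by_cases hbwj : bw j = 0
      · -- bw j = 0 case
        set g := ((X.transpose * X).mulVec bw) j with hgdef
        have key : ∀ t : ℝ, 0 < t → t < 1/2 →
            ∀ σ : ℝ, σ = 1 ∨ σ = -1 →
            (-2 * L * w j - 2 * σ * g) * t ≤ ((∑ i, (X i j)^2) - L * (w j)^2) * t^2 := by
          intro t ht htε σ hσ
          have hc' : (0:ℝ) < 1 - w j * t := by nlinarith
          have hF := Fpert S0 s w bw (t := σ * t) j
          rw [← hcdef, hc1, if_neg hj, hbwj] at hF
          have habs : |(0:ℝ) + σ * t| - |(0:ℝ)| = t := by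
            rcases hσ with h | h <;> simp [h, abs_of_pos ht, abs_of_neg, ht.le] <;>
              rw [abs_of_neg (by linarith)] <;> ring
          rw [habs] at hF
          have hk := key_ineq X S0 s w bw hminw j (σ * t) (1 - w j * t) hF hc'
          rw [← hLdef, ← hgdef] at hk
          have hσ2 : σ^2 = 1 := by rcases hσ with h | h <;> simp [h]
          rw [mul_pow, hσ2, one_mul] at hk
          nlinarith
        have h1 : -2 * L * w j - 2 * g ≤ 0 := by
          apply coef_nonpos _ ((∑ i, (X i j)^2) - L * (w j)^2) (1/2) (by norm_num)
          intro t ht htε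
          nlinarith [key t ht htε 1 (Or.inl rfl)]
        have h2 : -2 * L * w j + 2 * g ≤ 0 := by
          apply coef_nonpos _ ((∑ i, (X i j)^2) - L * (w j)^2) (1/2) (by norm_num)
          intro t ht htε
          nlinarith [key t ht htε (-1) (Or.inr rfl)]
        refine ⟨g / (L * w j), ?_, by simp [hbwj], ?_⟩
        · rw [abs_div, div_le_one (by positivity)]
          rw [abs_of_pos (by positivity : (0:ℝ) < L * w j)]
          rw [abs_le]; constructor <;> nlinarith
        · field_simp
      · -- bw j ≠ 0 case
        set σ := Real.sign (bw j) with hσdef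
        have hσbw : σ * bw j = |bw j| := sgn_mul_self (bw j)
        have hbwpos : 0 < |bw j| := abs_pos.mpr hbwj
        have hσ2 : σ^2 = 1 := by
          rcases lt_trichotomy (bw j) 0 with h|h|h
          · simp [hσdef, Real.sign_of_neg h]
          · exact absurd h hbwj
          · simp [hσdef, Real.sign_of_pos h]
        have key : ∀ t : ℝ, t ≠ 0 → |t| < min |bw j| (1/2) →
            (-2 * L * w j * σ - 2 * ((X.transpose * X).mulVec bw) j) * t
              ≤ ((∑ i, (X i j)^2) - L * (w j)^2 * σ^2) * t^2 := by
          intro t ht htε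
          have ht1 : |t| < |bw j| := lt_of_lt_of_le htε (min_le_left _ _)
          have ht2 : |t| < 1/2 := lt_of_lt_of_le htε (min_le_right _ _)
          have habs : |bw j + t| = |bw j| + σ * t := by
            rcases lt_trichotomy (bw j) 0 with h|h|h
            · have hσ1 : σ = -1 := by simp [hσdef, Real.sign_of_neg h]
              have : bw j + t < 0 := by
                have := abs_lt.mp ht1
                rw [abs_of_neg h] at *
                linarith [this.2]
              rw [abs_of_neg this, abs_of_neg h, hσ1]; ring
            · exact absurd h hbwj
            · have hσ1 : σ = 1 := by simp [hσdef, Real.sign_of_pos h]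
              have : 0 < bw j + t := by
                have := abs_lt.mp ht1
                rw [abs_of_pos h] at *
                linarith [this.1]
              rw [abs_of_pos this, abs_of_pos h, hσ1]; ring
          have hc' : (0:ℝ) < 1 - w j * (σ * t) := by
            have : |σ * t| < 1/2 := by
              rw [abs_mul]
              calc |σ| * |t| ≤ 1 * |t| := by
                    apply mul_le_mul_of_nonneg_right _ (abs_nonneg t)
                    rcases lt_trichotomy (bw j) 0 with h|h|h
                    · simp [hσdef, Real.sign_of_neg h]
                    · exact absurd h hbwj
                    · simp [hσdef, Real.sign_of_pos h]
                _ = |t| := by ring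
                _ < 1/2 := ht2
            have := abs_lt.mp this
            nlinarith
          have hF := Fpert S0 s w bw j t
          rw [← hcdef, hc1, if_neg hj, habs] at hF
          have hF' : ((∑ k ∈ S0, s k * (bw k + if k = j then t else 0))
              - ∑ k ∈ S0ᶜ, w k * |bw k + if k = j then t else 0|) = 1 - w j * (σ * t) := by
            rw [hF]; ring
          have hk := key_ineq X S0 s w bw hminw j t (1 - w j * (σ * t)) hF' hc'
          rw [← hLdef] at hk
          nlinarith
        have hεpos : (0:ℝ) < min |bw j| (1/2) := lt_min hbwpos (by norm_num)
        have h0 := coef_zero _ _ _ hεpos key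
        refine ⟨-σ, ?_, ?_, ?_⟩
        · rw [abs_neg]; exact abs_sgn_le (bw j)
        · rw [← hσbw]; ring
        · nlinarith
    -- assemble
    refine ⟨fun j => if h : j ∈ S0 then s j else Classical.choose (hgoff j h), ?_, ?_, ?_, ?_⟩
    · intro j
      by_cases hj : j ∈ S0
      · simp only [hj, dif_pos, if_pos]
        rw [hgS0 j hj]; ring
      · simp only [hj, dif_neg, if_neg, not_false_iff]
        exact (Classical.choose_spec (hgoff j hj)).2.2
    · intro j hj; simp [hj]
    · intro j hj
      simp only [hj, dif_neg, not_false_iff]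
      exact (Classical.choose_spec (hgoff j hj)).1
    · rw [← Finset.sum_neg_distrib]
      apply Finset.sum_congr rfl
      intro j hj
      rw [Finset.mem_compl] at hj
      simp only [hj, dif_neg, not_false_iff]
      exact (Classical.choose_spec (hgoff j hj)).2.1

theorem stmt17 {n p : ℕ} (X : Matrix (Fin n) (Fin p) ℝ) (S0 : Finset (Fin p))
    (vbar : Fin p → ℝ) (hv : ∀ j ∉ S0, 0 < vbar j ∧ vbar j < 1)
    (bstar : Fin p → ℝ)
    (hconstar : l1 (restr S0 bstar) - (∑ j ∈ S0ᶜ, (1 + vbar j) * |bstar j|) = 1)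
    (hminstar : ∀ b : Fin p → ℝ,
      l1 (restr S0 b) - (∑ j ∈ S0ᶜ, (1 + vbar j) * |b j|) = 1 → qf X bstar ≤ qf X b)
    (w : Fin p → ℝ) (hw : ∀ j ∉ S0, 1 - vbar j ≤ w j ∧ w j ≤ 1 + vbar j)
    (bw : Fin p → ℝ)
    (hconw : (∑ j ∈ S0, Real.sign (bstar j) * bw j) - (∑ j ∈ S0ᶜ, w j * |bw j|) ≥ 1)
    (hminw : ∀ b : Fin p → ℝ,
      (∑ j ∈ S0, Real.sign (bstar j) * b j) - (∑ j ∈ S0ᶜ, w j * |b j|) ≥ 1 →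
      qf X bw ≤ qf X b) :
    (∃ z : Fin p → ℝ,
      (∀ j, ((X.transpose * X).mulVec bw) j =
        qf X bw * ((if j ∈ S0 then 1 else w j) * z j)) ∧
      (∀ j ∈ S0, z j = Real.sign (bstar j)) ∧
      (∀ j ∉ S0, |z j| ≤ 1) ∧
      (∑ j ∈ S0ᶜ, z j * bw j) = -(∑ j ∈ S0ᶜ, |bw j|)) ∧
    (S0.card : ℝ) * qf X bw / n ≤ (S0.card : ℝ) * qf X bstar / n := by
  have hwb : ∀ j ∉ S0, 0 < w j ∧ w j < 2 := by
    intro j hj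
    obtain ⟨h1, h2⟩ := hv j hj
    obtain ⟨h3, h4⟩ := hw j hj
    constructor <;> linarith
  constructor
  · exact kkt X S0 (fun j => Real.sign (bstar j)) w (fun j => abs_sgn_le _) hwb bw hconw hminw
  · -- part 2
    have hfeas : (∑ j ∈ S0, Real.sign (bstar j) * bstar j)
        - (∑ j ∈ S0ᶜ, w j * |bstar j|) ≥ 1 := by
      have hl1 : l1 (restr S0 bstar) = ∑ j ∈ S0, |bstar j| := by
        unfold l1 restr
        simp only [apply_ite abs, abs_zero]
        rw [Finset.sum_ite_mem, Finset.univ_inter]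
      have h1 : ∑ j ∈ S0, Real.sign (bstar j) * bstar j = l1 (restr S0 bstar) := by
        rw [hl1]
        exact Finset.sum_congr rfl fun j _ => sgn_mul_self _
      have h2 : ∑ j ∈ S0ᶜ, w j * |bstar j| ≤ ∑ j ∈ S0ᶜ, (1 + vbar j) * |bstar j| := by
        apply Finset.sum_le_sum
        intro j hj
        rw [Finset.mem_compl] at hj
        exact mul_le_mul_of_nonneg_right (hw j hj).2 (abs_nonneg _)
      linarith
    have hqle : qf X bw ≤ qf X bstar := hminw bstar hfeas
    gcongr
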